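/- Let Y be a real Hilbert space, h : Y → ℝ differentiable with gradient ∇h, and H : Y → (Y →L[ℝ] Y) a Hessian field of h (for every y, ∇h has Fréchet derivative H(y) at y) such that each H(y) is self-adjoint, μ‖v‖² ≤ ⟨H(y)v, v⟩ ≤ L_{g,1}‖v‖² for all y, v (with 0 < μ ≤ L_{g,1}), and ‖H(y) − H(y')‖_op ≤ L_{g,2}‖y − y'‖. Let y* satisfy ∇h(y*) = 0, fix y ∈ Y, write H := H(y), and let 0 < γ ≤ 1/L_{g,1}. Then for every v ∈ Y, setting v⁺ := v − γ(H(v) − ∇h(y)), one has ‖y − v⁺ − y*‖ ≤ (1 − μγ)‖y − v − y*‖ + (L_{g,2} γ/2)‖y − y*‖². -/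

import Mathlib

open scoped RealInnerProductSpace
open Set

/-- Cauchy–Schwarz for a PSD self-adjoint operator. -/
lemma psd_cauchy_schwarz {Y : Type*} [NormedAddCommGroup Y] [InnerProductSpace ℝ Y]
    (A : Y →L[ℝ] Y) (sym : ∀ u w : Y, ⟪A u, w⟫ = ⟪u, A w⟫)
    (psd : ∀ u : Y, 0 ≤ ⟪A u, u⟫) (u w : Y) :
    ⟪A u, w⟫ ^ 2 ≤ ⟪A u, u⟫ * ⟪A w, w⟫ := by
  have key : ∀ t : ℝ, 0 ≤ ⟪A w, w⟫ * (t * t) + (2 * ⟪A u, w⟫) * t + ⟪A u, u⟫ := by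
    intro t
    have hpsd := psd (u + t • w)
    have h1 : ⟪A w, u⟫ = ⟪A u, w⟫ := by rw [sym w u, real_inner_comm]
    have expand : ⟪A (u + t • w), u + t • w⟫
        = ⟪A w, w⟫ * (t * t) + (2 * ⟪A u, w⟫) * t + ⟪A u, u⟫ := by
      rw [map_add, map_smul]
      simp only [inner_add_left, inner_add_right, real_inner_smul_left, real_inner_smul_right]
      rw [h1]; ring
    linarith [expand ▸ hpsd]
  have hd := discrim_le_zero key
  rw [discrim] at hd
  nlinarith [hd]

/-- Norm bound for a self-adjoint operator with quadratic form between `0` and `c‖·‖²`. -/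
lemma psd_norm_bound {Y : Type*} [NormedAddCommGroup Y] [InnerProductSpace ℝ Y]
    (A : Y →L[ℝ] Y) (sym : ∀ u w : Y, ⟪A u, w⟫ = ⟪u, A w⟫)
    (psd : ∀ u : Y, 0 ≤ ⟪A u, u⟫) {c : ℝ} (hc : 0 ≤ c)
    (ub : ∀ u : Y, ⟪A u, u⟫ ≤ c * ‖u‖ ^ 2) (e : Y) :
    ‖A e‖ ≤ c * ‖e‖ := by
  have h1 : ⟪A e, A e⟫ ^ 2 ≤ ⟪A e, e⟫ * ⟪A (A e), A e⟫ := by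
    have h := psd_cauchy_schwarz A sym psd e (A e)
    nlinarith [h, sq_nonneg (⟪A e, A e⟫ : ℝ)]
  have h2 : ⟪A e, A e⟫ = ‖A e‖ ^ 2 := real_inner_self_eq_norm_sq (A e)
  have h3 : ⟪A e, e⟫ ≤ c * ‖e‖ ^ 2 := ub e
  have h4 : ⟪A (A e), A e⟫ ≤ c * ‖A e‖ ^ 2 := ub (A e)
  have h5 : 0 ≤ ⟪A e, e⟫ := psd e
  have h6 : 0 ≤ ⟪A (A e), A e⟫ := psd (A e)
  rcases eq_or_lt_of_le (norm_nonneg (A e)) with hz | hz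
  · rw [← hz]; positivity
  · have key : ‖A e‖ ^ 2 * ‖A e‖ ^ 2 ≤ (c * ‖e‖) ^ 2 * ‖A e‖ ^ 2 := by
      nlinarith [mul_le_mul h3 h4 h6 (by positivity : (0:ℝ) ≤ c * ‖e‖ ^ 2)]
    have key2 : ‖A e‖ ^ 2 ≤ (c * ‖e‖) ^ 2 :=
      le_of_mul_le_mul_right key (by positivity)
    nlinarith [mul_nonneg hc (norm_nonneg e)]

/-- Second-order Taylor remainder bound for a Lipschitz Hessian. -/
lemma taylor_bound {Y : Type*} [NormedAddCommGroup Y] [InnerProductSpace ℝ Y]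
    (gradh : Y → Y) (Hf : Y → Y →L[ℝ] Y) (Lg2 : ℝ)
    (hHess : ∀ y : Y, HasFDerivAt gradh (Hf y) y)
    (hLip : ∀ y y' : Y, ‖Hf y - Hf y'‖ ≤ Lg2 * ‖y - y'‖)
    (y z : Y) :
    ‖gradh z - gradh y - Hf y (z - y)‖ ≤ Lg2 / 2 * ‖z - y‖ ^ 2 := by
  set d := z - y with hd
  rcases eq_or_ne d 0 with h0 | h0
  · have hz : z = y := sub_eq_zero.mp h0
    simp only [hz] at h0 ⊢
    rw [h0]
    simp
  · have hdpos : 0 < ‖d‖ := norm_pos_iff.mpr h0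
    have hLg2 : 0 ≤ Lg2 := by
      have h1 := hLip y (y + d)
      have h2 : ‖(y : Y) - (y + d)‖ = ‖d‖ := by
        rw [show (y : Y) - (y + d) = -d by abel, norm_neg]
      rw [h2] at h1
      nlinarith [norm_nonneg (Hf y - Hf (y + d))]
    set φ : ℝ → Y := fun t => gradh (y + t • d) - gradh y - t • Hf y d with hφ
    set φ' : ℝ → Y := fun t => Hf (y + t • d) d - Hf y d with hφ'
    have hderiv : ∀ t : ℝ, HasDerivAt φ (φ' t) t := by
      intro t
      have hc : HasDerivAt (fun t : ℝ => y + t • d) d t := by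
        simpa using ((hasDerivAt_id t).smul_const d).const_add y
      have hg : HasDerivAt (fun t : ℝ => gradh (y + t • d)) (Hf (y + t • d) d) t := by
        exact (hHess (y + t • d)).comp_hasDerivAt t hc
      have hlin : HasDerivAt (fun t : ℝ => t • Hf y d) (Hf y d) t := by
        simpa using (hasDerivAt_id t).smul_const (Hf y d)
      exact (hg.sub_const (gradh y)).sub hlin
    have key := image_norm_le_of_norm_deriv_right_le_deriv_boundary
      (f := φ) (f' := φ') (a := 0) (b := 1)
      (fun t _ => (hderiv t).continuousAt.continuousWithinAt)
      (fun t _ => (hderiv t).hasDerivWithinAt)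
      (B := fun t => Lg2 * ‖d‖ ^ 2 * (t ^ 2 / 2)) (B' := fun t => Lg2 * ‖d‖ ^ 2 * t)
      (by simp [hφ])
      (by
        intro t
        have : HasDerivAt (fun t : ℝ => t ^ 2 / 2) t t := by
          simpa using (hasDerivAt_pow 2 t).div_const 2
        simpa using this.const_mul (Lg2 * ‖d‖ ^ 2))
      (by
        intro t ht
        have h1 : φ' t = (Hf (y + t • d) - Hf y) d := by
          simp [hφ', ContinuousLinearMap.sub_apply]
        rw [h1]
        have h2 : ‖(Hf (y + t • d) - Hf y) d‖ ≤ ‖Hf (y + t • d) - Hf y‖ * ‖d‖ :=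
          (Hf (y + t • d) - Hf y).le_opNorm d
        have h3 : ‖Hf (y + t • d) - Hf y‖ ≤ Lg2 * ‖t • d‖ := by
          have := hLip (y + t • d) y
          rwa [show y + t • d - y = t • d by abel] at this
        have h4 : ‖t • d‖ = t * ‖d‖ := by
          rw [norm_smul, Real.norm_eq_abs, abs_of_nonneg ht.1]
        calc ‖(Hf (y + t • d) - Hf y) d‖ ≤ ‖Hf (y + t • d) - Hf y‖ * ‖d‖ := h2
          _ ≤ Lg2 * ‖t • d‖ * ‖d‖ := by
              apply mul_le_mul_of_nonneg_right h3 (norm_nonneg d)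
          _ = Lg2 * ‖d‖ ^ 2 * t := by rw [h4]; ring)
    have hone := key (x := 1) (by norm_num)
    have hφ1 : φ 1 = gradh z - gradh y - Hf y (z - y) := by
      simp [hφ, hd]
    rw [hφ1] at hone
    calc ‖gradh z - gradh y - Hf y (z - y)‖ ≤ Lg2 * ‖d‖ ^ 2 * ((1:ℝ) ^ 2 / 2) := hone
      _ = Lg2 / 2 * ‖z - y‖ ^ 2 := by rw [← hd]; ring

/-- One-step contraction inequality (eq. 1eq in the proof of Lemma C.2) for the inner
gradient-descent iteration approximating the Newton direction. -/
theorem stmt_7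
    {Y : Type*} [NormedAddCommGroup Y] [InnerProductSpace ℝ Y] [CompleteSpace Y]
    (h : Y → ℝ) (gradh : Y → Y) (Hf : Y → Y →L[ℝ] Y)
    (μ Lg1 Lg2 γ : ℝ) (hμ : 0 < μ) (hμL : μ ≤ Lg1)
    (hgrad : ∀ y : Y, HasGradientAt h (gradh y) y)
    (hHess : ∀ y : Y, HasFDerivAt gradh (Hf y) y)
    (hsym : ∀ y v w : Y, ⟪Hf y v, w⟫ = ⟪v, Hf y w⟫)
    (hlb : ∀ y v : Y, μ * ‖v‖ ^ 2 ≤ ⟪Hf y v, v⟫)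
    (hub : ∀ y v : Y, ⟪Hf y v, v⟫ ≤ Lg1 * ‖v‖ ^ 2)
    (hLip : ∀ y y' : Y, ‖Hf y - Hf y'‖ ≤ Lg2 * ‖y - y'‖)
    (ystar : Y) (hstar : gradh ystar = 0)
    (y : Y) (hγ : 0 < γ) (hγle : γ ≤ 1 / Lg1) :
    ∀ v : Y,
      ‖y - (v - γ • (Hf y v - gradh y)) - ystar‖
        ≤ (1 - μ * γ) * ‖y - v - ystar‖ + Lg2 * γ / 2 * ‖y - ystar‖ ^ 2 := by
  intro v
  have hLg1 : 0 < Lg1 := lt_of_lt_of_le hμ hμL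
  have hγL : γ * Lg1 ≤ 1 := by
    rw [le_div_iff₀ hLg1] at hγle; linarith
  have hμγ : 0 ≤ 1 - μ * γ := by nlinarith
  set e : Y := y - v - ystar with he
  set r : Y := Hf y (y - ystar) - gradh y with hr
  set A : Y →L[ℝ] Y := ContinuousLinearMap.id ℝ Y - γ • Hf y with hA
  have hAapp : ∀ u : Y, A u = u - γ • Hf y u := fun u => rfl
  have hAsym : ∀ u w : Y, ⟪A u, w⟫ = ⟪u, A w⟫ := by
    intro u w
    simp only [hAapp, inner_sub_left, inner_sub_right, real_inner_smul_left,
      real_inner_smul_right, hsym y u w]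
  have hApsd : ∀ u : Y, 0 ≤ ⟪A u, u⟫ := by
    intro u
    have h1 := hub y u
    simp only [hAapp, inner_sub_left, real_inner_smul_left, real_inner_self_eq_norm_sq]
    nlinarith [sq_nonneg ‖u‖]
  have hAub : ∀ u : Y, ⟪A u, u⟫ ≤ (1 - μ * γ) * ‖u‖ ^ 2 := by
    intro u
    have h1 := hlb y u
    simp only [hAapp, inner_sub_left, real_inner_smul_left, real_inner_self_eq_norm_sq]
    nlinarith
  have hAe : ‖A e‖ ≤ (1 - μ * γ) * ‖e‖ := psd_norm_bound A hAsym hApsd hμγ hAub e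
  have hrb : ‖r‖ ≤ Lg2 / 2 * ‖y - ystar‖ ^ 2 := by
    have ht := taylor_bound gradh Hf Lg2 hHess hLip y ystar
    have h1 : gradh ystar - gradh y - Hf y (ystar - y) = r := by
      rw [hstar, hr, map_sub, map_sub]
      abel
    rw [h1] at ht
    calc ‖r‖ ≤ Lg2 / 2 * ‖ystar - y‖ ^ 2 := ht
      _ = Lg2 / 2 * ‖y - ystar‖ ^ 2 := by rw [norm_sub_rev]
  have hdecomp : y - (v - γ • (Hf y v - gradh y)) - ystar = A e + γ • r := by
    have hv : v = (y - ystar) - e := by rw [he]; abel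
    rw [hAapp, hr, hv, map_sub]
    module
  rw [hdecomp]
  calc ‖A e + γ • r‖ ≤ ‖A e‖ + ‖γ • r‖ := norm_add_le _ _
    _ = ‖A e‖ + γ * ‖r‖ := by rw [norm_smul, Real.norm_eq_abs, abs_of_pos hγ]
    _ ≤ (1 - μ * γ) * ‖e‖ + γ * (Lg2 / 2 * ‖y - ystar‖ ^ 2) := by
        have := mul_le_mul_of_nonneg_left hrb hγ.le
        linarith
    _ = (1 - μ * γ) * ‖y - v - ystar‖ + Lg2 * γ / 2 * ‖y - ystar‖ ^ 2 := by
        rw [← he]; ring
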